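/- Let M be a torsion-free left module over an integral domain R. For every submodule N of M, the closure of the localization equals the localization of the closure: Cl_{D⁻¹M}(D⁻¹N) = D⁻¹(Cl_M(N)), where D = R \ {0}; consequently, for any family {N_α}_{α ∈ Λ} of submodules of M whose images form an (internal) direct sum in D⁻¹M, one has Cl_{D⁻¹M}(⨁_{α ∈ Λ} N_α) = ⨁_{α ∈ Λ} Cl_{D⁻¹M}(N_α) and Cl_M(⨁_{α ∈ Λ} N_α) = M ∩ D⁻¹(⨁_{α ∈ Λ} Cl_M(N_α)). -/

import Mathlib

open nonZeroDivisors

set_option linter.unusedSectionVars false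

/-- The closure of a submodule `N` of a (torsion-free) module `M` over an integral domain:
all elements `m` with `r • m ∈ N` for some nonzero `r`. -/
def Submodule.closureOfNonzero {R M : Type*} [CommRing R] [IsDomain R] [AddCommGroup M] [Module R M]
    (N : Submodule R M) : Submodule R M where
  carrier := {m : M | ∃ r : R, r ≠ 0 ∧ r • m ∈ N}
  zero_mem' := ⟨1, one_ne_zero, by simp⟩
  add_mem' := by
    rintro a b ⟨r, hr, hra⟩ ⟨s, hs, hsb⟩
    refine ⟨r * s, mul_ne_zero hr hs, ?_⟩
    rw [smul_add]
    exact N.add_mem (by rw [mul_comm, mul_smul]; exact N.smul_mem s hra)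
      (by rw [mul_smul]; exact N.smul_mem r hsb)
  smul_mem' := by
    rintro c a ⟨r, hr, hra⟩
    exact ⟨r, hr, by rw [smul_comm]; exact N.smul_mem c hra⟩

section aux
variable {R M : Type*} [CommRing R] [IsDomain R] [AddCommGroup M] [Module R M]

lemma Submodule.mem_closure' {N : Submodule R M} {x : M} :
    x ∈ N.closureOfNonzero ↔ ∃ r : R, r ≠ 0 ∧ r • x ∈ N := Iff.rfl

lemma Submodule.le_closure' (N : Submodule R M) : N ≤ N.closureOfNonzero :=
  fun x hx => ⟨1, one_ne_zero, by simpa using hx⟩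

lemma Submodule.closure_mono' {N P : Submodule R M} (h : N ≤ P) : N.closureOfNonzero ≤ P.closureOfNonzero := by
  rintro x ⟨r, hr, hx⟩; exact ⟨r, hr, h hx⟩

lemma Submodule.closure_closure' (N : Submodule R M) : N.closureOfNonzero.closureOfNonzero = N.closureOfNonzero := by
  refine le_antisymm ?_ N.closureOfNonzero.le_closure'
  rintro x ⟨r, hr, s, hs, hx⟩
  exact ⟨s * r, mul_ne_zero hs hr, by rwa [mul_smul]⟩

end aux

section aux2
variable {R : Type*} [CommRing R] [IsDomain R]
  {M : Type*} [AddCommGroup M] [Module R M] [NoZeroSMulDivisors R M]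

local notation "f" => LocalizedModule.mkLinearMap R⁰ M

/-- In a localized module, closure commutes with arbitrary sups. -/
lemma closure_iSup_eq {ι : Type*} (W : ι → Submodule R (LocalizedModule R⁰ M)) :
    Submodule.closureOfNonzero (⨆ α, W α) = ⨆ α, Submodule.closureOfNonzero (W α) := by
  refine le_antisymm ?_ (iSup_le fun α => Submodule.closure_mono' (le_iSup W α))
  rintro z ⟨t, ht, hz⟩
  have ht' : t ∈ R⁰ := mem_nonZeroDivisors_of_ne_zero ht
  have hu := IsLocalizedModule.map_units f (⟨t, ht'⟩ : R⁰)
  set e : Module.End R (LocalizedModule R⁰ M) := ↑hu.unit⁻¹ with he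
  have key : ∀ y, t • e y = y := by
    intro y
    have h1 : (hu.unit * hu.unit⁻¹ : Module.End R (LocalizedModule R⁰ M)) y = y := by
      rw [hu.unit.mul_inv]; rfl
    have h2 : (hu.unit : Module.End R (LocalizedModule R⁰ M)) (e y) = y := h1
    rwa [IsUnit.unit_spec, Module.algebraMap_end_apply] at h2
  have key2 : ∀ y, e (t • y) = y := by
    intro y
    have h1 : (hu.unit⁻¹ * hu.unit : Module.End R (LocalizedModule R⁰ M)) y = y := by
      rw [hu.unit.inv_mul]; rfl
    have h2 : e ((hu.unit : Module.End R (LocalizedModule R⁰ M)) y) = y := h1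
    rwa [IsUnit.unit_spec, Module.algebraMap_end_apply] at h2
  have hmem : e (t • z) ∈ Submodule.map e (⨆ α, W α) := Submodule.mem_map_of_mem hz
  rw [key2 z] at hmem
  rw [Submodule.map_iSup] at hmem
  refine (iSup_mono fun α => ?_ : (⨆ α, Submodule.map e (W α)) ≤ _) hmem
  rintro y ⟨w, hw, rfl⟩
  exact ⟨t, ht, by rw [key w]; exact hw⟩

lemma closure_localized₀ (N : Submodule R M) :
    Submodule.closureOfNonzero (N.localized₀ R⁰ f) = (Submodule.closureOfNonzero N).localized₀ R⁰ f := by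
  ext z
  constructor
  · rintro ⟨r, hr, hz⟩
    rw [Submodule.mem_localized₀] at hz
    obtain ⟨n, hn, d, hd⟩ := hz
    obtain ⟨⟨m, s⟩, hms⟩ := IsLocalizedModule.mk'_surjective R⁰ f z
    simp only [Function.uncurry_apply_pair] at hms
    subst hms
    rw [← IsLocalizedModule.mk'_smul, IsLocalizedModule.mk'_eq_mk'_iff] at hd
    obtain ⟨u, hu⟩ := hd
    refine ⟨m, ⟨(u * d * r : R), ?_, ?_⟩, s, rfl⟩
    · exact mul_ne_zero (mul_ne_zero (nonZeroDivisors.ne_zero u.2) (nonZeroDivisors.ne_zero d.2))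
        hr
    · have : (u : R) • (d : R) • r • m = (u : R) • (s : R) • n := by
        simpa [Submonoid.smul_def] using hu
      rw [mul_smul, mul_smul, this, ← Submonoid.smul_def, ← Submonoid.smul_def]
      exact N.smul_mem _ (N.smul_mem _ hn)
  · rintro ⟨n, ⟨r, hr, hrn⟩, d, rfl⟩
    refine ⟨r, hr, ?_⟩
    rw [← IsLocalizedModule.mk'_smul]
    exact ⟨r • n, hrn, d, rfl⟩

end aux2

/-- For a torsion-free module `M` over an integral domain `R` with `D = R \ {0}`:
the closure of the localization of a submodule equals the localization of the closure,
and consequently the closure (in `D⁻¹M`, resp. in `M`) commutes with (internal) direct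
sums of submodules. -/
theorem closure_localized_eq_localized_closure {R : Type*} [CommRing R] [IsDomain R]
    {M : Type*} [AddCommGroup M] [Module R M] [NoZeroSMulDivisors R M] :
    (∀ N : Submodule R M,
      Submodule.closureOfNonzero
          (N.localized₀ R⁰ (LocalizedModule.mkLinearMap R⁰ M)) =
        (Submodule.closureOfNonzero N).localized₀ R⁰ (LocalizedModule.mkLinearMap R⁰ M)) ∧
    ∀ {ι : Type*} (N : ι → Submodule R M),
      iSupIndep (fun α => (N α).map (LocalizedModule.mkLinearMap R⁰ M)) →
        Submodule.closureOfNonzero ((⨆ α, N α).map (LocalizedModule.mkLinearMap R⁰ M)) =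
            ⨆ α, Submodule.closureOfNonzero ((N α).map (LocalizedModule.mkLinearMap R⁰ M)) ∧
          Submodule.closureOfNonzero (⨆ α, N α) =
            Submodule.comap (LocalizedModule.mkLinearMap R⁰ M)
              ((⨆ α, Submodule.closureOfNonzero (N α)).localized₀ R⁰
                (LocalizedModule.mkLinearMap R⁰ M)) := by
  refine ⟨closure_localized₀, fun {ι} N _ => ⟨?_, ?_⟩⟩
  · rw [Submodule.map_iSup, closure_iSup_eq]
  · set f := LocalizedModule.mkLinearMap R⁰ M
    ext m
    simp only [Submodule.mem_comap, Submodule.mem_localized₀]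
    constructor
    · rintro ⟨r, hr, hrm⟩
      have hrm' : r • m ∈ ⨆ α, Submodule.closureOfNonzero (N α) :=
        (iSup_mono fun α => Submodule.le_closure' (N α)) hrm
      refine ⟨r • m, hrm', ⟨r, mem_nonZeroDivisors_of_ne_zero hr⟩, ?_⟩
      exact IsLocalizedModule.mk'_cancel f m ⟨r, mem_nonZeroDivisors_of_ne_zero hr⟩
    · rintro ⟨n, hn, d, hd⟩
      rw [← IsLocalizedModule.mk'_one R⁰ f, IsLocalizedModule.mk'_eq_mk'_iff] at hd
      obtain ⟨u, hu⟩ := hd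
      have h1 : ((u : R) * (d : R)) • m = (u : R) • n := by
        simpa [Submonoid.smul_def, mul_smul] using hu
      have h2 : (u : R) • n ∈ Submodule.closureOfNonzero (⨆ α, N α) :=
        (iSup_le fun α => Submodule.closure_mono' (le_iSup N α))
          (Submodule.smul_mem _ _ hn)
      have : m ∈ (Submodule.closureOfNonzero (⨆ α, N α)).closureOfNonzero :=
        ⟨(u : R) * (d : R), mul_ne_zero (nonZeroDivisors.ne_zero u.2)
          (nonZeroDivisors.ne_zero d.2), h1 ▸ h2⟩
      rwa [Submodule.closure_closure'] at this
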